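/- Let G be a Gauss diagram and let G' be obtained from G by adding a single chord c' neither of whose endpoints separates any existing chord endpoint pairs in a way that creates crossings (i.e., c' is isolated, corresponding to a Reidemeister I move). Then for every original chord c, the data i(c), l(c), r(c), and g_c(v) are unchanged (the two new endpoints of c', having opposite signs, lie on the same side of every original chord and contribute 0 to every signed count), and g_{c'}(v) = 0; hence F_{G'}(u,v) = F_G(u,v). -/

import Mathlib

open Finsupp

/-- Formal Laurent polynomials in `v` over `ℤ`, used as exponents of `u`. -/
abbrev LaurentExp : Type := ℤ →₀ ℤ

/-- Formal `ℤ`-linear combinations of symbols `u^p`, `p` a Laurent polynomial in `v`. -/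
abbrev FPoly : Type := LaurentExp →₀ ℤ

/-- A combinatorial Gauss diagram of a knotoid diagram: `n` signed directed chords,
whose `2*n` endpoints (an over-endpoint and an under-endpoint for each chord) occupy
distinct positions along the oriented arc.  The two endpoints of the arc itself lie
before position `0` and after position `2*n - 1`. -/
structure GaussDiagram where
  n : ℕ
  sign : Fin n → ℤ
  overPos : Fin n → Fin (2 * n)
  under : Fin n → Fin (2 * n)
  sign_pm : ∀ c, sign c = 1 ∨ sign c = -1
  endpoints_inj : Function.Injective (Sum.elim overPos under)

namespace GaussDiagram

variable (G : GaussDiagram)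

/-- Position `p` lies strictly between the two endpoints of chord `c`,
i.e. on the side of `c` NOT containing the endpoints of the arc
(the complement of the lead side of `c`). -/
def between (c : Fin G.n) (p : Fin (2 * G.n)) : Prop :=
  min (G.overPos c).val (G.under c).val < p.val ∧ p.val < max (G.overPos c).val (G.under c).val

instance (c : Fin G.n) (p : Fin (2 * G.n)) : Decidable (G.between c p) := by
  unfold between; infer_instance

/-- Chord `e` crosses chord `c`: exactly one endpoint of `e` lies between the endpoints of `c`. -/
def crosses (c e : Fin G.n) : Prop :=
  e ≠ c ∧ (G.between c (G.overPos e) ↔ ¬ G.between c (G.under e))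

instance (c e : Fin G.n) : Decidable (G.crosses c e) := by
  unfold crosses; infer_instance

/-- The signed contribution of the endpoints of chord `e` lying on the lead side of `c`
(the over-endpoint counts `sign e`, the under-endpoint counts `- sign e`). -/
def contrib (c e : Fin G.n) : ℤ :=
  (if ¬ G.between c (G.overPos e) then G.sign e else 0)
    + (if ¬ G.between c (G.under e) then - G.sign e else 0)

/-- The intersection index `i(c)`: the sum of the signs of the chord-endpoints lying on
the lead side of `c`, excluding the endpoints of `c` itself. -/
def i (c : Fin G.n) : ℤ := ∑ e ∈ Finset.univ.erase c, G.contrib c e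

/-- `r(c)`: chords crossing `c` whose over-endpoint lies on the lead side of `c`
(chords pointing away from the lead side). -/
def rset (c : Fin G.n) : Finset (Fin G.n) :=
  Finset.univ.filter fun e => G.crosses c e ∧ ¬ G.between c (G.overPos e)

/-- `l(c)`: chords crossing `c` whose under-endpoint lies on the lead side of `c`
(chords pointing toward the lead side). -/
def lset (c : Fin G.n) : Finset (Fin G.n) :=
  Finset.univ.filter fun e => G.crosses c e ∧ ¬ G.between c (G.under e)

end GaussDiagram

/-- The reduction map `φ` modulo `m`, realized by canonical representatives in `ℤ`:
for `m ≠ 0` it picks the representative in `[0, m)`; for `m = 0` it is the identity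
(no reduction, matching `ℤ[v,v⁻¹]/(v⁰ - 1) = ℤ[v,v⁻¹]`). -/
def redExp (m : ℕ) (k : ℤ) : ℤ := if m = 0 then k else k % (m : ℤ)

namespace GaussDiagram

variable (G : GaussDiagram)

/-- The index function `g_c(v) = Σ_{r ∈ r(c)} sign(r) v^{φ_c(i(r))} - Σ_{l ∈ l(c)} sign(l) v^{φ_c(-i(l))}`,
an element of `ℤ[v,v⁻¹]/(v^{|i(c)|} - 1)` realized via canonical exponent representatives. -/
noncomputable def gfun (c : Fin G.n) : LaurentExp :=
  (∑ e ∈ G.rset c, G.sign e • Finsupp.single (redExp (G.i c).natAbs (G.i e)) (1 : ℤ))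
    - ∑ e ∈ G.lset c, G.sign e • Finsupp.single (redExp (G.i c).natAbs (- G.i e)) (1 : ℤ)

/-- The F-polynomial `F_G(u,v) = Σ_c sign(c) (u^{g_c(v)} - 1)`. -/
noncomputable def F : FPoly :=
  ∑ c : Fin G.n, G.sign c • (Finsupp.single (G.gfun c) (1 : ℤ) - Finsupp.single 0 1)

end GaussDiagram

/-- let `G'` be obtained from `G` by a Reidemeister I move, i.e. by adding a
single isolated chord `c'` whose two endpoints are adjacent along the arc (all original
chords are re-embedded by a strictly monotone position map `ρ` onto the complement of the
two new endpoints, keeping their signs).  Then for every original chord `c` the data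
`i(c)`, `l(c)`, `r(c)` and `g_c(v)` are unchanged (the two new endpoints, having opposite
signs, lie on the same side of every original chord and contribute `0` to every signed
count), `g_{c'}(v) = 0`, and hence `F_{G'}(u,v) = F_G(u,v)`. -/
theorem r1_invariance (G G' : GaussDiagram) (hn : G'.n = G.n + 1)
    (ι : Fin G.n → Fin G'.n) (hι : ∀ c, (ι c).val = c.val)
    (c' : Fin G'.n) (hc' : c'.val = G.n)
    (ρ : Fin (2 * G.n) → Fin (2 * G'.n)) (hmono : StrictMono ρ)
    (hrange : ∀ q : Fin (2 * G'.n), (∃ p, ρ p = q) ↔ q ≠ G'.overPos c' ∧ q ≠ G'.under c')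
    (hadj : (G'.under c').val = (G'.overPos c').val + 1 ∨
            (G'.overPos c').val = (G'.under c').val + 1)
    (hsign : ∀ c, G'.sign (ι c) = G.sign c)
    (hover : ∀ c, G'.overPos (ι c) = ρ (G.overPos c))
    (hunder : ∀ c, G'.under (ι c) = ρ (G.under c)) :
    (∀ c : Fin G.n, G'.i (ι c) = G.i c) ∧
    (∀ c : Fin G.n, G'.lset (ι c) = (G.lset c).image ι) ∧
    (∀ c : Fin G.n, G'.rset (ι c) = (G.rset c).image ι) ∧
    (∀ c : Fin G.n, G'.gfun (ι c) = G.gfun c) ∧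
    G'.gfun c' = 0 ∧ G'.F = G.F := by

  -- basic facts
  have hιinj : Function.Injective ι := fun a b h => Fin.ext (by rw [← hι a, ← hι b, h])
  have hιne : ∀ c, ι c ≠ c' := by
    intro c h
    have h1 := hι c
    rw [h, hc'] at h1
    have := c.isLt
    omega
  have hρne : ∀ p, ρ p ≠ G'.overPos c' ∧ ρ p ≠ G'.under c' :=
    fun p => (hrange (ρ p)).1 ⟨p, rfl⟩
  have hAB : ∀ a b : Fin (2 * G.n), (ρ a).val < (ρ b).val ↔ a.val < b.val := by
    intro a b
    rw [← Fin.lt_def, ← Fin.lt_def]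
    exact hmono.lt_iff_lt
  have hbet : ∀ (c : Fin G.n) (p : Fin (2 * G.n)),
      G'.between (ι c) (ρ p) ↔ G.between c p := by
    intro c p
    simp only [GaussDiagram.between, hover, hunder, min_lt_iff, lt_max_iff, hAB]
  have hne_o : ∀ p, (ρ p).val ≠ (G'.overPos c').val := fun p h => (hρne p).1 (Fin.ext h)
  have hne_u : ∀ p, (ρ p).val ≠ (G'.under c').val := fun p h => (hρne p).2 (Fin.ext h)
  have hside : ∀ c, (G'.between (ι c) (G'.overPos c') ↔ G'.between (ι c) (G'.under c')) := by
    intro c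
    simp only [GaussDiagram.between, hover, hunder, min_lt_iff, lt_max_iff]
    have h1 := hne_o (G.overPos c)
    have h2 := hne_o (G.under c)
    have h3 := hne_u (G.overPos c)
    have h4 := hne_u (G.under c)
    omega
  have hbetc' : ∀ p, ¬ G'.between c' p := by
    intro p
    simp only [GaussDiagram.between, min_lt_iff, lt_max_iff]
    omega
  have hdec : ∀ x : Fin G'.n, x = c' ∨ ∃ e, ι e = x := by
    intro x
    rcases Nat.lt_or_ge x.val G.n with h | h
    · exact Or.inr ⟨⟨x.val, h⟩, Fin.ext (hι _)⟩
    · left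
      apply Fin.ext
      have hx : x.val < G.n + 1 := hn ▸ x.isLt
      omega
  have hnotmem : c' ∉ Finset.univ.image ι := by
    simp only [Finset.mem_image]
    rintro ⟨e, -, he⟩
    exact hιne e he
  have huniv : (Finset.univ : Finset (Fin G'.n)) = insert c' (Finset.univ.image ι) := by
    ext x
    simp only [Finset.mem_univ, Finset.mem_insert, Finset.mem_image, true_iff]
    rcases hdec x with h | ⟨e, he⟩
    · exact Or.inl h
    · exact Or.inr ⟨e, trivial, he⟩
  have hcr : ∀ c e, (G'.crosses (ι c) (ι e) ↔ G.crosses c e) := by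
    intro c e
    simp only [GaussDiagram.crosses, hover, hunder, hbet, ne_eq, hιinj.eq_iff]
  have hcrc' : ∀ c, ¬ G'.crosses (ι c) c' := by
    rintro c ⟨-, h⟩
    rw [hside c] at h
    exact iff_not_self h
  have hcrc'e : ∀ e, ¬ G'.crosses c' e := by
    rintro e ⟨-, h⟩
    have h1 := hbetc' (G'.overPos e)
    have h2 := hbetc' (G'.under e)
    tauto
  have hcontrib : ∀ c e, G'.contrib (ι c) (ι e) = G.contrib c e := by
    intro c e
    simp only [GaussDiagram.contrib, hover, hunder, hbet, hsign]
  have hcontribc' : ∀ c, G'.contrib (ι c) c' = 0 := by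
    intro c
    rcases Classical.em (G'.between (ι c) (G'.overPos c')) with h | h
    · have h2 := (hside c).mp h
      simp [GaussDiagram.contrib, h, h2]
    · have h2 : ¬ G'.between (ι c) (G'.under c') := fun x => h ((hside c).mpr x)
      simp [GaussDiagram.contrib, h, h2]
  have himg_erase : ∀ c : Fin G.n,
      (Finset.univ.image ι).erase (ι c) = (Finset.univ.erase c).image ι := by
    intro c
    rw [← Finset.image_erase hιinj]
  have hi : ∀ c, G'.i (ι c) = G.i c := by
    intro c
    unfold GaussDiagram.i
    rw [huniv, Finset.erase_insert_of_ne (Ne.symm (hιne c)), Finset.sum_insert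
      (fun h => hnotmem (Finset.mem_of_mem_erase h)), hcontribc', himg_erase,
      Finset.sum_image (fun a _ b _ h => hιinj h)]
    rw [zero_add]
    exact Finset.sum_congr rfl fun e _ => hcontrib c e
  have hl : ∀ c, G'.lset (ι c) = (G.lset c).image ι := by
    intro c
    ext x
    simp only [GaussDiagram.lset, Finset.mem_filter, Finset.mem_univ, true_and,
      Finset.mem_image]
    constructor
    · rintro ⟨h1, h2⟩
      rcases hdec x with rfl | ⟨e, rfl⟩
      · exact absurd h1 (hcrc' c)
      · rw [hunder, hbet] at h2
        exact ⟨e, ⟨(hcr c e).mp h1, h2⟩, rfl⟩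
    · rintro ⟨e, ⟨h1, h2⟩, rfl⟩
      exact ⟨(hcr c e).mpr h1, by rw [hunder, hbet]; exact h2⟩
  have hr : ∀ c, G'.rset (ι c) = (G.rset c).image ι := by
    intro c
    ext x
    simp only [GaussDiagram.rset, Finset.mem_filter, Finset.mem_univ, true_and,
      Finset.mem_image]
    constructor
    · rintro ⟨h1, h2⟩
      rcases hdec x with rfl | ⟨e, rfl⟩
      · exact absurd h1 (hcrc' c)
      · rw [hover, hbet] at h2
        exact ⟨e, ⟨(hcr c e).mp h1, h2⟩, rfl⟩
    · rintro ⟨e, ⟨h1, h2⟩, rfl⟩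
      exact ⟨(hcr c e).mpr h1, by rw [hover, hbet]; exact h2⟩
  have hg : ∀ c, G'.gfun (ι c) = G.gfun c := by
    intro c
    unfold GaussDiagram.gfun
    rw [hl, hr, hi, Finset.sum_image (fun a _ b _ h => hιinj h),
      Finset.sum_image (fun a _ b _ h => hιinj h)]
    congr 1 <;> exact Finset.sum_congr rfl fun e _ => by rw [hsign, hi]
  have hgc' : G'.gfun c' = 0 := by
    have hrs : G'.rset c' = ∅ := by
      ext x
      simp only [GaussDiagram.rset, Finset.mem_filter, Finset.notMem_empty, iff_false]
      rintro ⟨-, h, -⟩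
      exact hcrc'e x h
    have hls : G'.lset c' = ∅ := by
      ext x
      simp only [GaussDiagram.lset, Finset.mem_filter, Finset.notMem_empty, iff_false]
      rintro ⟨-, h, -⟩
      exact hcrc'e x h
    simp [GaussDiagram.gfun, hrs, hls]
  refine ⟨hi, hl, hr, hg, hgc', ?_⟩
  unfold GaussDiagram.F
  rw [huniv, Finset.sum_insert hnotmem, hgc',
    Finset.sum_image (fun a _ b _ h => hιinj h)]
  simp only [sub_self, smul_zero, zero_add]
  exact Finset.sum_congr rfl fun e _ => by rw [hsign, hg]
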